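/- For every finite family T of arcs, n · q(T) = Σ_{x ∈ X_T} q(T_x̂), where the sum runs over all vertices x ∈ V that lie in no interior Int(g), g ∈ T, and T_x̂ is T with all arcs having x as hook or denouement deleted (so T_x̂ = T when x lies in no hood at all). This is the paper's iteration formula q(A) = (1/n)[ Σ_{x ∈ 𝒳⁰} q(A) + Σ_{x ∈ 𝒳¹} q(KQ_n/I_x̂) + Σ_{x ∈ 𝒳²} q(KQ_n/I_x̂) ] for the number of quasi-hereditary orderings of a Nakayama algebra. -/
import Mathlib


/-- The denouement of an arc `(h, ℓ)`: the vertex `h + (ℓ - 1)` in `ZMod n`. -/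
def arcDen {n : ℕ} (g : ZMod n × ℕ) : ZMod n := g.1 + ((g.2 - 1 : ℕ) : ZMod n)

/-- The interior of an arc `(h, ℓ)`: the set `{h + j : 1 ≤ j ≤ ℓ - 2}` in `ZMod n`. -/
def arcInt {n : ℕ} (g : ZMod n × ℕ) : Finset (ZMod n) :=
  (Finset.Icc 1 (g.2 - 2)).image (fun j : ℕ => g.1 + (j : ZMod n))

/-- The hood of an arc `(h, ℓ)`: the set `{h + j : 0 ≤ j ≤ ℓ - 1}` in `ZMod n`. -/
def arcHood {n : ℕ} (g : ZMod n × ℕ) : Finset (ZMod n) :=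
  (Finset.range g.2).image (fun j : ℕ => g.1 + (j : ZMod n))

/-- A linear order on `ZMod n`, encoded by its ranking equivalence `σ : ZMod n ≃ Fin n`
(`v ≺ w` iff `σ v < σ w`), is admissible for the arc `g` if every interior vertex of `g`
lies strictly below the hook or strictly below the denouement of `g`. -/
def Admissible {n : ℕ} (σ : ZMod n ≃ Fin n) (g : ZMod n × ℕ) : Prop :=
  ∀ v ∈ arcInt g, σ v < σ g.1 ∨ σ v < σ (arcDen g)

/-- `qCount n T` is the number of linear orders on `ZMod n` (encoded by ranking
equivalences `ZMod n ≃ Fin n`) admissible for every arc of `T`. -/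
noncomputable def qCount (n : ℕ) (T : Finset (ZMod n × ℕ)) : ℕ :=
  Nat.card {σ : ZMod n ≃ Fin n // ∀ g ∈ T, Admissible σ g}

/-- `qCountAt n x T` is the number of linear orders on `ZMod n` admissible for every arc
of `T` and whose greatest element is `x`. -/
noncomputable def qCountAt (n : ℕ) (x : ZMod n) (T : Finset (ZMod n × ℕ)) : ℕ :=
  Nat.card {σ : ZMod n ≃ Fin n //
    (∀ g ∈ T, Admissible σ g) ∧ ∀ v : ZMod n, σ v ≤ σ x}

/-- `delAt x T` is the subfamily of arcs of `T` for which `x` is neither the hook nor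
the denouement. -/
def delAt {n : ℕ} (x : ZMod n) (T : Finset (ZMod n × ℕ)) : Finset (ZMod n × ℕ) :=
  T.filter fun g => g.1 ≠ x ∧ arcDen g ≠ x

/-- The arc `g'` is a subpath of the arc `g` if there is `j ≥ 0` with
`h' = h + j` in `ZMod n` and `j + ℓ' ≤ ℓ`. -/
def Subpath {n : ℕ} (g' g : ZMod n × ℕ) : Prop :=
  ∃ j : ℕ, g'.1 = g.1 + (j : ZMod n) ∧ j + g'.2 ≤ g.2

/-! ### Auxiliary machinery -/

section Aux

variable {n : ℕ}

/-- The top element of `Fin n`. -/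
def topF (n : ℕ) [NeZero n] : Fin n := ⟨n - 1, by have := NeZero.pos n; omega⟩

lemma le_topF [NeZero n] (i : Fin n) : i ≤ topF n := by
  have := i.isLt
  simp only [topF, Fin.le_def]
  omega

/-- The permutation of `Fin n` moving `k` to the top, sliding everything above `k`
down by one, and fixing everything below `k`. -/
def mtFun (k i : Fin n) : Fin n :=
  if i.val < k.val then i
  else if i.val = k.val then ⟨n - 1, by have := k.isLt; omega⟩
  else ⟨i.val - 1, by have := i.isLt; omega⟩

def mtInv (k j : Fin n) : Fin n :=
  if j.val < k.val then j
  else if j.val = n - 1 then k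
  else ⟨min (j.val + 1) (n - 1), by have := j.isLt; omega⟩

lemma mtFun_val (k i : Fin n) :
    (mtFun k i).val = if i.val < k.val then i.val
      else if i.val = k.val then n - 1 else i.val - 1 := by
  unfold mtFun; split_ifs <;> rfl

lemma mtInv_val (k j : Fin n) :
    (mtInv k j).val = if j.val < k.val then j.val
      else if j.val = n - 1 then k.val else min (j.val + 1) (n - 1) := by
  unfold mtInv; split_ifs <;> rfl

def moveTop (k : Fin n) : Fin n ≃ Fin n where
  toFun := mtFun k
  invFun := mtInv k
  left_inv i := by
    have hk := k.isLt; have hi := i.isLt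
    apply Fin.ext
    rw [mtInv_val, mtFun_val]
    split_ifs <;> omega
  right_inv j := by
    have hk := k.isLt; have hj := j.isLt
    apply Fin.ext
    rw [mtFun_val, mtInv_val]
    split_ifs <;> omega

lemma moveTop_val (k i : Fin n) :
    (moveTop k i).val = if i.val < k.val then i.val
      else if i.val = k.val then n - 1 else i.val - 1 := mtFun_val k i

lemma moveTop_self (k : Fin n) [NeZero n] : moveTop k k = topF n := by
  apply Fin.ext
  simp [moveTop_val, topF]

lemma moveTop_lt_iff (k : Fin n) {i j : Fin n} (hi : i ≠ k) (hj : j ≠ k) :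
    moveTop k i < moveTop k j ↔ i < j := by
  have hi' : i.val ≠ k.val := fun h => hi (Fin.ext h)
  have hj' : j.val ≠ k.val := fun h => hj (Fin.ext h)
  have h1 := i.isLt; have h2 := j.isLt; have h3 := k.isLt
  simp only [Fin.lt_def, moveTop_val]
  split_ifs <;> omega

lemma natCard_sigma {ι : Type*} [Fintype ι] (f : ι → Type*) [∀ i, Finite (f i)] :
    Nat.card (Σ i, f i) = ∑ i, Nat.card (f i) := by
  classical
  letI : ∀ i, Fintype (f i) := fun i => Fintype.ofFinite _
  simp [Nat.card_eq_fintype_card, Fintype.card_sigma]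

variable [NeZero n]

lemma max_eq_topF {x : ZMod n} {σ : ZMod n ≃ Fin n} (h : ∀ v : ZMod n, σ v ≤ σ x) :
    σ x = topF n := by
  obtain ⟨w, hw⟩ := σ.surjective (topF n)
  exact le_antisymm (le_topF _) (hw ▸ h w)

/-- Partition the admissible orders according to their maximum. -/
lemma qCount_eq_sum (T : Finset (ZMod n × ℕ)) :
    qCount n T = ∑ x : ZMod n, qCountAt n x T := by
  have e : {σ : ZMod n ≃ Fin n // ∀ g ∈ T, Admissible σ g} ≃
      Σ x : ZMod n, {σ : ZMod n ≃ Fin n //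
        (∀ g ∈ T, Admissible σ g) ∧ ∀ v : ZMod n, σ v ≤ σ x} :=
    { toFun := fun σ => ⟨σ.1.symm (topF n), σ.1, σ.2, fun v => by
        rw [σ.1.apply_symm_apply]; exact le_topF _⟩
      invFun := fun p => ⟨p.2.1, p.2.2.1⟩
      left_inv := fun σ => rfl
      right_inv := fun p => by
        obtain ⟨x, σ, h1, h2⟩ := p
        have hx : σ.symm (topF n) = x := by
          rw [← max_eq_topF h2, Equiv.symm_apply_apply]
        subst hx
        rfl }
  rw [qCount, Nat.card_congr e, natCard_sigma]
  rfl

lemma qCountAt_eq_zero {x : ZMod n} {T : Finset (ZMod n × ℕ)}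
    (h : ¬ ∀ g ∈ T, x ∉ arcInt g) : qCountAt n x T = 0 := by
  push_neg at h
  obtain ⟨g, hg, hxg⟩ := h
  have : IsEmpty {σ : ZMod n ≃ Fin n //
      (∀ g ∈ T, Admissible σ g) ∧ ∀ v : ZMod n, σ v ≤ σ x} := by
    constructor
    rintro ⟨σ, hP, hmax⟩
    rcases hP g hg x hxg with h | h
    · exact absurd h (not_lt.2 (hmax _))
    · exact absurd h (not_lt.2 (hmax _))
  exact Nat.card_of_isEmpty

lemma qCountAt_delAt {x : ZMod n} {T : Finset (ZMod n × ℕ)}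
    (hx : ∀ g ∈ T, x ∉ arcInt g) : qCountAt n x T = qCountAt n x (delAt x T) := by
  apply Nat.card_congr
  apply Equiv.subtypeEquivRight
  intro σ
  constructor
  · rintro ⟨hP, hmax⟩
    exact ⟨fun g hg => hP g (Finset.mem_filter.1 hg).1, hmax⟩
  · rintro ⟨hP, hmax⟩
    refine ⟨fun g hg => ?_, hmax⟩
    by_cases hc : g.1 ≠ x ∧ arcDen g ≠ x
    · exact hP g (Finset.mem_filter.2 ⟨hg, hc⟩)
    · intro v hv
      have hvx : v ≠ x := fun h => hx g hg (h ▸ hv)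
      have hlt : σ v < σ x :=
        lt_of_le_of_ne (hmax v) (fun h => hvx (σ.injective h))
      rcases not_and_or.1 hc with h | h
      · push_neg at h
        exact Or.inl (h ▸ hlt)
      · push_neg at h
        exact Or.inr (h ▸ hlt)

/-- If `x` is not involved in any arc of `T'`, then its position in an admissible
order is irrelevant: the count factors as `n` times the count with `x` on top. -/
lemma qCount_eq_n_mul {x : ZMod n} {T' : Finset (ZMod n × ℕ)}
    (hx : ∀ g ∈ T', g.1 ≠ x ∧ arcDen g ≠ x ∧ x ∉ arcInt g) :
    qCount n T' = n * qCountAt n x T' := by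
  have adm_iff : ∀ (k : Fin n) (σ : ZMod n ≃ Fin n), σ x = k →
      ((∀ g ∈ T', Admissible σ g) ↔
        (∀ g ∈ T', Admissible (σ.trans (moveTop k)) g)) := by
    intro k σ hσx
    refine forall₂_congr fun g hg => forall₂_congr fun v hv => ?_
    obtain ⟨h1, h2, h3⟩ := hx g hg
    have hv_ne : σ v ≠ k := by
      rw [← hσx]; intro h; exact h3 (σ.injective h ▸ hv)
    have hh_ne : σ g.1 ≠ k := by rw [← hσx]; exact fun h => h1 (σ.injective h)
    have hd_ne : σ (arcDen g) ≠ k := by rw [← hσx]; exact fun h => h2 (σ.injective h)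
    simp only [Equiv.trans_apply]
    rw [moveTop_lt_iff k hv_ne hh_ne, moveTop_lt_iff k hv_ne hd_ne]
  have e : {σ : ZMod n ≃ Fin n // ∀ g ∈ T', Admissible σ g} ≃
      (Fin n) × {τ : ZMod n ≃ Fin n //
        (∀ g ∈ T', Admissible τ g) ∧ ∀ v : ZMod n, τ v ≤ τ x} :=
    { toFun := fun σ => ⟨σ.1 x, σ.1.trans (moveTop (σ.1 x)),
        (adm_iff _ _ rfl).1 σ.2, fun v => by
          simp only [Equiv.trans_apply]
          rw [moveTop_self]
          exact le_topF _⟩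
      invFun := fun p => ⟨p.2.1.trans (moveTop p.1).symm, by
        have hσx : (p.2.1.trans (moveTop p.1).symm) x = p.1 := by
          simp only [Equiv.trans_apply]
          rw [max_eq_topF p.2.2.2, ← moveTop_self p.1, Equiv.symm_apply_apply]
        have hback : (p.2.1.trans (moveTop p.1).symm).trans (moveTop p.1) = p.2.1 :=
          Equiv.ext fun v => (moveTop p.1).apply_symm_apply _
        exact (adm_iff p.1 _ hσx).2 (by rw [hback]; exact p.2.2.1)⟩
      left_inv := fun σ => Subtype.ext (Equiv.ext fun v =>
        (moveTop (σ.1 x)).symm_apply_apply _)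
      right_inv := fun p => by
        obtain ⟨k, τ, hP, hmax⟩ := p
        have hσx : (τ.trans (moveTop k).symm) x = k := by
          simp only [Equiv.trans_apply]
          rw [max_eq_topF hmax, ← moveTop_self k, Equiv.symm_apply_apply]
        have hσx2 : (moveTop k).symm (τ x) = k := hσx
        refine Prod.ext hσx (Subtype.ext (Equiv.ext fun v => ?_))
        simp only [Equiv.trans_apply]
        rw [hσx2]
        exact (moveTop k).apply_symm_apply _ }
  rw [qCount, Nat.card_congr e, Nat.card_prod, Nat.card_eq_fintype_card,
    Fintype.card_fin]
  rfl

end Aux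

theorem iteration_formula (n : ℕ) [NeZero n] (hn : 2 ≤ n)
    (T : Finset (ZMod n × ℕ)) (hT : ∀ g ∈ T, 3 ≤ g.2) :
    n * qCount n T =
      ∑ x ∈ Finset.univ.filter (fun x : ZMod n => ∀ g ∈ T, x ∉ arcInt g),
        qCount n (delAt x T) := by
  classical
  have h1 : (∑ x ∈ Finset.univ.filter (fun x : ZMod n => ∀ g ∈ T, x ∉ arcInt g),
      qCountAt n x T) = ∑ x : ZMod n, qCountAt n x T :=
    Finset.sum_filter_of_ne (fun x _ hne => by
      by_contra hp
      exact hne (qCountAt_eq_zero hp))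
  calc n * qCount n T
      = n * ∑ x ∈ Finset.univ.filter (fun x : ZMod n => ∀ g ∈ T, x ∉ arcInt g),
          qCountAt n x T := by rw [qCount_eq_sum, h1]
    _ = ∑ x ∈ Finset.univ.filter (fun x : ZMod n => ∀ g ∈ T, x ∉ arcInt g),
          n * qCountAt n x T := Finset.mul_sum _ _ _
    _ = ∑ x ∈ Finset.univ.filter (fun x : ZMod n => ∀ g ∈ T, x ∉ arcInt g),
          qCount n (delAt x T) := by
        refine Finset.sum_congr rfl fun x hxmem => ?_
        have hxX : ∀ g ∈ T, x ∉ arcInt g := (Finset.mem_filter.1 hxmem).2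
        have hcond : ∀ g ∈ delAt x T, g.1 ≠ x ∧ arcDen g ≠ x ∧ x ∉ arcInt g := by
          intro g hg
          obtain ⟨hgT, hA, hB⟩ := Finset.mem_filter.1 hg
          exact ⟨hA, hB, hxX g hgT⟩
        rw [qCountAt_delAt hxX, ← qCount_eq_n_mul hcond]
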